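/- Let R be a commutative ring, J = (f1, …, fn) an ideal, and h ∈ R an element integral over J (i.e. h satisfies h^d + a1·h^{d-1} + ⋯ + a_d = 0 with a_i ∈ J^i). Then for each i, the element h/f_i of the localization R[1/f_i] is integral over the subring R_i = R[f1/f_i, …, fn/f_i] of R[1/f_i]. -/
import Mathlib


/-- `h` is integral over the ideal `I`: it satisfies an equation of integral dependence
`h ^ d + a 1 * h ^ (d - 1) + ⋯ + a d = 0` with `a j ∈ I ^ j`. -/
def IdealIntegral {R : Type*} [CommRing R] (I : Ideal R) (h : R) : Prop :=
  ∃ d : ℕ, 0 < d ∧ ∃ a : ℕ → R, (∀ j, 1 ≤ j → j ≤ d → a j ∈ I ^ j) ∧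
    h ^ d + ∑ j ∈ Finset.range d, a (j + 1) * h ^ (d - (j + 1)) = 0

lemma mem_adjoin_of_mem_pow {R : Type*} [CommRing R] {n : ℕ} (f : Fin n → R) (i : Fin n)
    (m : ℕ) (a : R) (ha : a ∈ Ideal.span (Set.range f) ^ m) :
    algebraMap R (Localization.Away (f i)) a * Localization.Away.invSelf (f i) ^ m ∈
      Algebra.adjoin R (Set.range fun j : Fin n =>
        algebraMap R (Localization.Away (f i)) (f j) * Localization.Away.invSelf (f i)) := by
  set S := Algebra.adjoin R (Set.range fun j : Fin n =>
      algebraMap R (Localization.Away (f i)) (f j) * Localization.Away.invSelf (f i))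
  induction m generalizing a with
  | zero =>
    simpa using S.algebraMap_mem a
  | succ m ih =>
    rw [pow_succ'] at ha
    refine Submodule.mul_induction_on ha (fun x hx y hy => ?_) (fun p q hp hq => ?_)
    · have hx' : algebraMap R (Localization.Away (f i)) x *
          Localization.Away.invSelf (f i) ∈ S := by
        induction hx using Submodule.span_induction with
        | mem z hz =>
          obtain ⟨j, rfl⟩ := hz
          exact Algebra.subset_adjoin ⟨j, rfl⟩
        | zero => simpa using S.zero_mem
        | add u v _ _ hu hv => rw [map_add, add_mul]; exact S.add_mem hu hv
        | smul r u _ hu =>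
          rw [smul_eq_mul, map_mul, mul_assoc]
          exact S.mul_mem (S.algebraMap_mem r) hu
      have := S.mul_mem hx' (ih y hy)
      rw [map_mul]
      convert this using 1
      ring
    · rw [map_add, add_mul]
      exact S.add_mem hp hq

/-- If `h` is integral over `J = (f 1, …, f n)`, then for each `i` the element `h / f i`
of the localization `R[1/f i]` is integral over the subring
`R_i = R[f 1/f i, …, f n/f i]`. -/
theorem stmt0 {R : Type*} [CommRing R] {n : ℕ} (f : Fin n → R) (h : R)
    (hint : IdealIntegral (Ideal.span (Set.range f)) h) (i : Fin n) :
    IsIntegral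
      (Algebra.adjoin R (Set.range fun j : Fin n =>
        algebraMap R (Localization.Away (f i)) (f j) * Localization.Away.invSelf (f i)))
      (algebraMap R (Localization.Away (f i)) h * Localization.Away.invSelf (f i)) := by
  obtain ⟨d, hd, a, hmem, heq⟩ := hint
  set φ := algebraMap R (Localization.Away (f i))
  set t := Localization.Away.invSelf (f i)
  set S := Algebra.adjoin R (Set.range fun j : Fin n =>
      algebraMap R (Localization.Away (f i)) (f j) * Localization.Away.invSelf (f i))
  set c : ℕ → S := fun j => if hj : 1 ≤ j ∧ j ≤ d then
      ⟨φ (a j) * t ^ j, mem_adjoin_of_mem_pow f i j (a j) (hmem j hj.1 hj.2)⟩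
    else 0
  refine ⟨Polynomial.X ^ d + ∑ j ∈ Finset.range d,
      Polynomial.C (c (j + 1)) * Polynomial.X ^ (d - (j + 1)), ?_, ?_⟩
  · apply Polynomial.monic_X_pow_add
    refine lt_of_le_of_lt (Polynomial.degree_sum_le _ _) ?_
    rw [Finset.sup_lt_iff (by exact_mod_cast WithBot.bot_lt_coe d)]
    intro j hj
    rw [Finset.mem_range] at hj
    refine lt_of_le_of_lt (Polynomial.degree_C_mul_X_pow_le _ _) ?_
    exact Nat.cast_lt.mpr (by omega)
  · have key : ∀ j ∈ Finset.range d,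
        ((c (j + 1) : Localization.Away (f i)) * (φ h * t) ^ (d - (j + 1)))
          = φ (a (j + 1) * h ^ (d - (j + 1))) * t ^ d := by
      intro j hj
      rw [Finset.mem_range] at hj
      have hj1 : 1 ≤ j + 1 ∧ j + 1 ≤ d := ⟨Nat.le_add_left 1 j, by omega⟩
      simp only [c, dif_pos hj1]
      rw [map_mul, mul_pow, map_pow]
      have : (j + 1) + (d - (j + 1)) = d := by omega
      calc φ (a (j+1)) * t ^ (j+1) * (φ h ^ (d - (j+1)) * t ^ (d - (j+1)))
          = φ (a (j+1)) * φ h ^ (d - (j+1)) * (t ^ (j+1) * t ^ (d - (j+1))) := by ring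
        _ = φ (a (j+1)) * φ h ^ (d - (j+1)) * t ^ d := by rw [← pow_add, this]
    simp only [Polynomial.eval₂_add, Polynomial.eval₂_pow, Polynomial.eval₂_X,
      Polynomial.eval₂_finset_sum, Polynomial.eval₂_mul, Polynomial.eval₂_C,
      Polynomial.aeval_def]
    have cast : ∀ x : S, algebraMap S (Localization.Away (f i)) x = (x : Localization.Away (f i)) := fun x => rfl
    simp only [cast]
    rw [Finset.sum_congr rfl key]
    have : (φ h * t) ^ d = φ (h ^ d) * t ^ d := by rw [mul_pow, map_pow]
    rw [this, ← Finset.sum_mul, ← map_sum, ← add_mul, ← map_add, heq, map_zero, zero_mul]
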